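/- Let g:(0,∞)→ℝ be C² with |s g'(s)| + |s² g''(s)| ≤ C(s^{α₁} + s^{α₂}) for all s>0, where 0<α₁≤α₂. Then for all s₁,s₂>0: |s₁² g'(s₁²) - s₂² g'(s₂²)| ≤ C' ( |s₁-s₂|^{min(2α₁,1)} (s₁+s₂)^{max(2α₁-1,0)} + |s₁-s₂|^{min(2α₂,1)} (s₁+s₂)^{max(2α₂-1,0)} ) for some constant C' depending only on C, α₁, α₂. -/

import Mathlib

lemma my_rpow_sub (x y p : ℝ) (hx : 0 ≤ x) (hy : 0 ≤ y) (hp : 0 ≤ p) (h1 : p ≤ 1) :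
    (x + y) ^ p ≤ x ^ p + y ^ p := by
  have h := NNReal.rpow_add_le_add_rpow ⟨x, hx⟩ ⟨y, hy⟩ hp h1
  have := NNReal.coe_le_coe.2 h
  push_cast at this
  exact this

lemma aux_pow (β a b : ℝ) (hβ : 0 < β) (hb : 0 < b) (hab : b ≤ a) :
    a ^ β - b ^ β ≤ max β 1 * ((a - b) ^ min β 1 * (a + b) ^ max (β - 1) 0) := by
  have ha : 0 < a := hb.trans_le hab
  rcases le_total β 1 with h1 | h1
  · rw [min_eq_left h1, max_eq_right (by linarith : β - 1 ≤ 0), Real.rpow_zero]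
    have key : a ^ β ≤ b ^ β + (a - b) ^ β := by
      have := my_rpow_sub b (a - b) β hb.le (by linarith) hβ.le h1
      simpa [add_sub_cancel] using this
    have h2 : (1 : ℝ) ≤ max β 1 := le_max_right _ _
    nlinarith [Real.rpow_nonneg (sub_nonneg.2 hab) β]
  · rw [min_eq_right h1, max_eq_left (by linarith : 0 ≤ β - 1), max_eq_left h1,
      Real.rpow_one]
    have hmvt : |a ^ β - b ^ β| ≤ β * (a + b) ^ (β - 1) * |a - b| := by
      have := Convex.norm_image_sub_le_of_norm_hasDerivWithin_le
        (f := fun x : ℝ => x ^ β) (f' := fun x : ℝ => β * x ^ (β - 1))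
        (s := Set.Icc b a) (C := β * (a + b) ^ (β - 1)) ?_ ?_ (convex_Icc b a)
        (Set.left_mem_Icc.2 hab) (Set.right_mem_Icc.2 hab)
      · simpa [Real.norm_eq_abs] using this
      · intro x hx
        exact (Real.hasDerivAt_rpow_const (Or.inl (hb.trans_le hx.1).ne')).hasDerivWithinAt
      · intro x hx
        have hx0 : 0 < x := hb.trans_le hx.1
        rw [Real.norm_eq_abs, abs_of_nonneg (by positivity)]
        have : x ^ (β - 1) ≤ (a + b) ^ (β - 1) :=
          Real.rpow_le_rpow hx0.le (by linarith [hx.2]) (by linarith)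
        exact mul_le_mul_of_nonneg_left this hβ.le
    calc a ^ β - b ^ β ≤ |a ^ β - b ^ β| := le_abs_self _
      _ ≤ β * (a + b) ^ (β - 1) * |a - b| := hmvt
      _ = β * ((a - b) * (a + b) ^ (β - 1)) := by
          rw [abs_of_nonneg (sub_nonneg.2 hab)]; ring

theorem stmt_3 (g : ℝ → ℝ) (C α₁ α₂ : ℝ) (hC : 0 < C) (hα₁ : 0 < α₁) (hα₁₂ : α₁ ≤ α₂)
    (hg : ContDiffOn ℝ 2 g (Set.Ioi 0))
    (hbound : ∀ s : ℝ, 0 < s →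
      |s * deriv g s| + |s ^ 2 * deriv (deriv g) s| ≤ C * (s ^ α₁ + s ^ α₂)) :
    ∃ C' : ℝ, 0 < C' ∧ ∀ s₁ s₂ : ℝ, 0 < s₁ → 0 < s₂ →
      |s₁ ^ 2 * deriv g (s₁ ^ 2) - s₂ ^ 2 * deriv g (s₂ ^ 2)|
        ≤ C' * (|s₁ - s₂| ^ min (2 * α₁) 1 * (s₁ + s₂) ^ max (2 * α₁ - 1) 0
              + |s₁ - s₂| ^ min (2 * α₂) 1 * (s₁ + s₂) ^ max (2 * α₂ - 1) 0) := by
  have hα₂ : 0 < α₂ := lt_of_lt_of_le hα₁ hα₁₂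
  have hβ₁ : (0:ℝ) < 2 * α₁ := by linarith
  have hβ₂ : (0:ℝ) < 2 * α₂ := by linarith
  -- differentiability of deriv g
  have hg' : ContDiffOn ℝ 1 (deriv g) (Set.Ioi 0) :=
    hg.deriv_of_isOpen isOpen_Ioi (by norm_num)
  have hdg : ∀ t : ℝ, 0 < t → DifferentiableAt ℝ (deriv g) t := fun t ht =>
    (hg'.differentiableOn (by norm_num)).differentiableAt (isOpen_Ioi.mem_nhds ht)
  -- derivative of F s = s² g'(s²)
  have hF : ∀ s : ℝ, 0 < s → HasDerivAt (fun s : ℝ => s ^ 2 * deriv g (s ^ 2))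
      (2 * s * deriv g (s ^ 2) + 2 * s ^ 3 * deriv (deriv g) (s ^ 2)) s := by
    intro s hs
    have hsq : HasDerivAt (fun s : ℝ => s ^ 2) (2 * s) s := by
      simpa using hasDerivAt_pow 2 s
    have h1 : HasDerivAt (deriv g) (deriv (deriv g) (s ^ 2)) (s ^ 2) :=
      (hdg _ (by positivity)).hasDerivAt
    have h2 : HasDerivAt (fun s : ℝ => deriv g (s ^ 2))
        (deriv (deriv g) (s ^ 2) * (2 * s)) s := by
      have h2' : HasDerivAt ((deriv g) ∘ (fun s : ℝ => s ^ 2))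
          (deriv (deriv g) (s ^ 2) * (2 * s)) s := HasDerivAt.comp s h1 hsq
      exact h2'
    have := hsq.mul h2
    refine this.congr_deriv ?_
    ring
  -- bound on F'
  have hFb : ∀ s : ℝ, 0 < s →
      |2 * s * deriv g (s ^ 2) + 2 * s ^ 3 * deriv (deriv g) (s ^ 2)| ≤
        2 * C * (s ^ (2 * α₁ - 1) + s ^ (2 * α₂ - 1)) := by
    intro s hs
    have hb := hbound (s ^ 2) (by positivity)
    have hsq2 : ∀ α : ℝ, ((s : ℝ) ^ 2) ^ α = s ^ (2 * α) := by
      intro α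
      rw [← Real.rpow_natCast s 2, ← Real.rpow_mul hs.le]
      norm_num
    rw [hsq2, hsq2] at hb
    have e1 : s ^ (2 * α₁ - 1) = s ^ (2 * α₁) / s := by
      rw [Real.rpow_sub hs, Real.rpow_one]
    have e2 : s ^ (2 * α₂ - 1) = s ^ (2 * α₂) / s := by
      rw [Real.rpow_sub hs, Real.rpow_one]
    have hA : |(s:ℝ) ^ 2 * deriv g (s ^ 2)| = s ^ 2 * |deriv g (s ^ 2)| := by
      rw [abs_mul, abs_of_pos (by positivity : (0:ℝ) < s ^ 2)]
    have hB : |((s:ℝ) ^ 2) ^ 2 * deriv (deriv g) (s ^ 2)| = s ^ 4 * |deriv (deriv g) (s ^ 2)| := by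
      rw [abs_mul, abs_of_pos (by positivity : (0:ℝ) < ((s:ℝ) ^ 2) ^ 2)]
      ring_nf
    rw [hA, hB] at hb
    have habs : |2 * s * deriv g (s ^ 2) + 2 * s ^ 3 * deriv (deriv g) (s ^ 2)| ≤
        2 * s * |deriv g (s ^ 2)| + 2 * s ^ 3 * |deriv (deriv g) (s ^ 2)| := by
      calc |2 * s * deriv g (s ^ 2) + 2 * s ^ 3 * deriv (deriv g) (s ^ 2)|
          ≤ |2 * s * deriv g (s ^ 2)| + |2 * s ^ 3 * deriv (deriv g) (s ^ 2)| := abs_add_le _ _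
        _ = 2 * s * |deriv g (s ^ 2)| + 2 * s ^ 3 * |deriv (deriv g) (s ^ 2)| := by
            rw [abs_mul (2 * s) (deriv g (s ^ 2)),
              abs_mul (2 * s ^ 3) (deriv (deriv g) (s ^ 2)),
              abs_of_pos (by positivity : (0:ℝ) < 2 * s),
              abs_of_pos (by positivity : (0:ℝ) < 2 * s ^ 3)]
    have step : 2 * s * |deriv g (s ^ 2)| + 2 * s ^ 3 * |deriv (deriv g) (s ^ 2)| =
        (2 / s) * (s ^ 2 * |deriv g (s ^ 2)| + s ^ 4 * |deriv (deriv g) (s ^ 2)|) := by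
      field_simp
    have step2 : (2 / s) * (s ^ 2 * |deriv g (s ^ 2)| + s ^ 4 * |deriv (deriv g) (s ^ 2)|)
        ≤ (2 / s) * (C * (s ^ (2 * α₁) + s ^ (2 * α₂))) :=
      mul_le_mul_of_nonneg_left hb (by positivity)
    have step3 : (2 / s) * (C * (s ^ (2 * α₁) + s ^ (2 * α₂))) =
        2 * C * (s ^ (2 * α₁ - 1) + s ^ (2 * α₂ - 1)) := by
      rw [e1, e2]
      field_simp
    linarith [habs, step.le, step2, step3.le, step.ge, step3.ge]
  -- antiderivative φ of the bound
  set φ : ℝ → ℝ := fun s => (2 * C / (2 * α₁)) * s ^ (2 * α₁)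
      + (2 * C / (2 * α₂)) * s ^ (2 * α₂) with hφdef
  have hφ : ∀ s : ℝ, 0 < s → HasDerivAt φ
      (2 * C * (s ^ (2 * α₁ - 1) + s ^ (2 * α₂ - 1))) s := by
    intro s hs
    have h1 := (Real.hasDerivAt_rpow_const (p := 2 * α₁) (Or.inl hs.ne')).const_mul
      (2 * C / (2 * α₁))
    have h2 := (Real.hasDerivAt_rpow_const (p := 2 * α₂) (Or.inl hs.ne')).const_mul
      (2 * C / (2 * α₂))
    have := h1.add h2
    refine this.congr_deriv ?_
    field_simp
  -- the constant
  refine ⟨(2 * C / (2 * α₁)) * max (2 * α₁) 1 + (2 * C / (2 * α₂)) * max (2 * α₂) 1,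
    by positivity, ?_⟩
  set c₁ := (2 * C / (2 * α₁)) * max (2 * α₁) 1 with hc₁
  set c₂ := (2 * C / (2 * α₂)) * max (2 * α₂) 1 with hc₂
  have hc₁0 : 0 < c₁ := by positivity
  have hc₂0 : 0 < c₂ := by positivity
  -- main claim for ordered arguments
  have main : ∀ s₁ s₂ : ℝ, 0 < s₂ → s₂ ≤ s₁ →
      |s₁ ^ 2 * deriv g (s₁ ^ 2) - s₂ ^ 2 * deriv g (s₂ ^ 2)|
        ≤ (c₁ + c₂) * (|s₁ - s₂| ^ min (2 * α₁) 1 * (s₁ + s₂) ^ max (2 * α₁ - 1) 0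
              + |s₁ - s₂| ^ min (2 * α₂) 1 * (s₁ + s₂) ^ max (2 * α₂ - 1) 0) := by
    intro s₁ s₂ hs₂ hle
    have hs₁ : 0 < s₁ := hs₂.trans_le hle
    -- monotonicity of φ ± F on [s₂, s₁]
    have hmono : ∀ ε : ℝ, ε = 1 ∨ ε = -1 →
        MonotoneOn (fun s => φ s + ε * (s ^ 2 * deriv g (s ^ 2))) (Set.Icc s₂ s₁) := by
      intro ε hε
      have hder : ∀ x ∈ Set.Ioo s₂ s₁, HasDerivAt
          (fun s => φ s + ε * (s ^ 2 * deriv g (s ^ 2)))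
          (2 * C * (x ^ (2 * α₁ - 1) + x ^ (2 * α₂ - 1))
            + ε * (2 * x * deriv g (x ^ 2) + 2 * x ^ 3 * deriv (deriv g) (x ^ 2))) x := by
        intro x hx
        exact (hφ x (hs₂.trans hx.1)).add ((hF x (hs₂.trans hx.1)).const_mul ε)
      apply monotoneOn_of_deriv_nonneg (convex_Icc _ _)
      · intro x hx
        have hx0 : 0 < x := lt_of_lt_of_le hs₂ hx.1
        exact ((hφ x hx0).add ((hF x hx0).const_mul ε)).continuousAt.continuousWithinAt
      · rw [interior_Icc]
        intro x hx
        exact (hder x hx).differentiableAt.differentiableWithinAt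
      · rw [interior_Icc]
        intro x hx
        rw [(hder x hx).deriv]
        have hx0 : 0 < x := hs₂.trans hx.1
        have hb := hFb x hx0
        have h1 := neg_abs_le (2 * x * deriv g (x ^ 2) + 2 * x ^ 3 * deriv (deriv g) (x ^ 2))
        have h2 := le_abs_self (2 * x * deriv g (x ^ 2) + 2 * x ^ 3 * deriv (deriv g) (x ^ 2))
        rcases hε with rfl | rfl <;> nlinarith
    have hMp := hmono 1 (Or.inl rfl) (Set.left_mem_Icc.2 hle) (Set.right_mem_Icc.2 hle) hle
    have hMm := hmono (-1) (Or.inr rfl) (Set.left_mem_Icc.2 hle) (Set.right_mem_Icc.2 hle) hle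
    simp only [one_mul, neg_one_mul, neg_mul] at hMp hMm
    have hφbd : |s₁ ^ 2 * deriv g (s₁ ^ 2) - s₂ ^ 2 * deriv g (s₂ ^ 2)| ≤ φ s₁ - φ s₂ := by
      rw [abs_le]
      constructor <;> [linarith [hMm]; linarith [hMp]]
    have hT₁ := aux_pow (2 * α₁) s₁ s₂ hβ₁ hs₂ hle
    have hT₂ := aux_pow (2 * α₂) s₁ s₂ hβ₂ hs₂ hle
    have habs : |s₁ - s₂| = s₁ - s₂ := abs_of_nonneg (by linarith)
    rw [habs]
    have hφeq : φ s₁ - φ s₂ = (2 * C / (2 * α₁)) * (s₁ ^ (2 * α₁) - s₂ ^ (2 * α₁))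
        + (2 * C / (2 * α₂)) * (s₁ ^ (2 * α₂) - s₂ ^ (2 * α₂)) := by
      rw [hφdef]; ring
    set T₁ := (s₁ - s₂) ^ min (2 * α₁) 1 * (s₁ + s₂) ^ max (2 * α₁ - 1) 0 with hT₁def
    set T₂ := (s₁ - s₂) ^ min (2 * α₂) 1 * (s₁ + s₂) ^ max (2 * α₂ - 1) 0 with hT₂def
    have hT₁0 : 0 ≤ T₁ := mul_nonneg (Real.rpow_nonneg (by linarith) _)
      (Real.rpow_nonneg (by linarith) _)
    have hT₂0 : 0 ≤ T₂ := mul_nonneg (Real.rpow_nonneg (by linarith) _)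
      (Real.rpow_nonneg (by linarith) _)
    have hd1 : (0:ℝ) < 2 * C / (2 * α₁) := by positivity
    have hd2 : (0:ℝ) < 2 * C / (2 * α₂) := by positivity
    have hb1 : (2 * C / (2 * α₁)) * (s₁ ^ (2 * α₁) - s₂ ^ (2 * α₁)) ≤ c₁ * T₁ := by
      rw [hc₁]
      calc (2 * C / (2 * α₁)) * (s₁ ^ (2 * α₁) - s₂ ^ (2 * α₁))
          ≤ (2 * C / (2 * α₁)) * (max (2 * α₁) 1 * T₁) :=
            mul_le_mul_of_nonneg_left hT₁ hd1.le
        _ = (2 * C / (2 * α₁)) * max (2 * α₁) 1 * T₁ := by ring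
    have hb2 : (2 * C / (2 * α₂)) * (s₁ ^ (2 * α₂) - s₂ ^ (2 * α₂)) ≤ c₂ * T₂ := by
      rw [hc₂]
      calc (2 * C / (2 * α₂)) * (s₁ ^ (2 * α₂) - s₂ ^ (2 * α₂))
          ≤ (2 * C / (2 * α₂)) * (max (2 * α₂) 1 * T₂) :=
            mul_le_mul_of_nonneg_left hT₂ hd2.le
        _ = (2 * C / (2 * α₂)) * max (2 * α₂) 1 * T₂ := by ring
    calc |s₁ ^ 2 * deriv g (s₁ ^ 2) - s₂ ^ 2 * deriv g (s₂ ^ 2)|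
        ≤ φ s₁ - φ s₂ := hφbd
      _ = (2 * C / (2 * α₁)) * (s₁ ^ (2 * α₁) - s₂ ^ (2 * α₁))
            + (2 * C / (2 * α₂)) * (s₁ ^ (2 * α₂) - s₂ ^ (2 * α₂)) := hφeq
      _ ≤ c₁ * T₁ + c₂ * T₂ := add_le_add hb1 hb2
      _ ≤ (c₁ + c₂) * (T₁ + T₂) := by
          nlinarith [mul_nonneg hc₁0.le hT₂0, mul_nonneg hc₂0.le hT₁0]
  intro s₁ s₂ hs₁ hs₂
  rcases le_total s₂ s₁ with h | h
  · exact main s₁ s₂ hs₂ h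
  · have := main s₂ s₁ hs₁ h
    rw [abs_sub_comm, abs_sub_comm s₁ s₂, add_comm s₁ s₂]
    exact this
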